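/- Let T be a monad on a Cartesian category C with a basic endorelation E such that the relation E1 on the terminal object is nonempty, let Q be a divergence domain, and let Δ = {Δ_I : (U(TI))² → Q} be a family of Q-divergences. Define d_{I,J}(f₁,f₂) = sup_{(x₁,x₂) ∈ EI} Δ_J(f₁ ∘ x₁, f₂ ∘ x₂) on the homsets of the Kleisli category C_T. Then d is an enrichment of C_T in Q-divergence spaces (i.e. d_{I,I}(id,id) ≤ 0 and d_{I,K}(g₁ ∘ f₁, g₂ ∘ f₂) ≤ d_{J,K}(g₁,g₂) + d_{I,J}(f₁,f₂) for Kleisli composition) if and only if Δ is E-unit-reflexive and E-composable. -/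

import Mathlib

/-- For a monad `(T, η, ♯)` on `Set`, a basic endorelation `E` with `E 1` nonempty,
and a family of `Q`-divergences `Δ_I` on `T I`, the homset divergences
`d_{I,J}(f₁,f₂) = sup_{(x₁,x₂) ∈ E I} Δ_J(f₁ x₁, f₂ x₂)` form an enrichment of the
Kleisli category (identity and composition inequalities) iff `Δ` is
`E`-unit-reflexive and `E`-composable. -/
theorem kleisli_enrichment_iff_divergence {Q : Type*} [CompleteLattice Q]
    [AddCommMonoid Q] [CovariantClass Q Q (· + ·) (· ≤ ·)]
    [CovariantClass Q Q (Function.swap (· + ·)) (· ≤ ·)]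
    (T : Type → Type) (pur : (I : Type) → I → T I)
    (sh : (I J : Type) → (I → T J) → T I → T J)
    (E : ∀ I : Type, I → I → Prop)
    (hEfun : ∀ (I J : Type) (f : I → J) (x y : I), E I x y → E J (f x) (f y))
    (hE1 : E PUnit PUnit.unit PUnit.unit)
    (Δ : ∀ I : Type, T I → T I → Q)
    (d : ∀ I J : Type, (I → T J) → (I → T J) → Q)
    (hd : ∀ (I J : Type) (f₁ f₂ : I → T J),
      d I J f₁ f₂ = ⨆ p : {p : I × I // E I p.1 p.2}, Δ J (f₁ p.1.1) (f₂ p.1.2)) :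
    ((∀ I : Type, d I I (fun x => pur I x) (fun x => pur I x) ≤ 0) ∧
      (∀ (I J K : Type) (g₁ g₂ : J → T K) (f₁ f₂ : I → T J),
        d I K (fun x => sh J K g₁ (f₁ x)) (fun x => sh J K g₂ (f₂ x)) ≤
          d J K g₁ g₂ + d I J f₁ f₂))
    ↔
    ((∀ I : Type,
        (⨆ p : {p : I × I // E I p.1 p.2}, Δ I (pur I p.1.1) (pur I p.1.2)) ≤ 0) ∧
      (∀ (I J : Type) (f₁ f₂ : I → T J) (c₁ c₂ : T I),
        Δ J (sh I J f₁ c₁) (sh I J f₂ c₂) ≤ Δ I c₁ c₂ +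
          ⨆ p : {p : I × I // E I p.1 p.2}, Δ J (f₁ p.1.1) (f₂ p.1.2))) := by
  constructor
  · rintro ⟨hid, hcomp⟩
    constructor
    · intro I; simpa [hd] using hid I
    · intro I J f₁ f₂ c₁ c₂
      have key := hcomp PUnit I J f₁ f₂ (fun _ => c₁) (fun _ => c₂)
      have hne : Nonempty {p : PUnit × PUnit // E PUnit p.1 p.2} :=
        ⟨⟨(PUnit.unit, PUnit.unit), hE1⟩⟩
      have h1 : Δ J (sh I J f₁ c₁) (sh I J f₂ c₂) ≤
          d PUnit J (fun x => sh I J f₁ ((fun _ => c₁) x))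
            (fun x => sh I J f₂ ((fun _ => c₂) x)) := by
        rw [hd]
        exact le_iSup (fun p : {p : PUnit × PUnit // E PUnit p.1 p.2} =>
          Δ J (sh I J f₁ c₁) (sh I J f₂ c₂)) ⟨(PUnit.unit, PUnit.unit), hE1⟩
      have h2 : d PUnit I (fun _ => c₁) (fun _ => c₂) = Δ I c₁ c₂ := by
        rw [hd]; exact iSup_const
      calc Δ J (sh I J f₁ c₁) (sh I J f₂ c₂)
          ≤ d I J f₁ f₂ + d PUnit I (fun _ => c₁) (fun _ => c₂) := le_trans h1 key
        _ = Δ I c₁ c₂ + ⨆ p : {p : I × I // E I p.1 p.2}, Δ J (f₁ p.1.1) (f₂ p.1.2) := by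
            rw [h2, hd, add_comm]
  · rintro ⟨hur, hcmp⟩
    constructor
    · intro I; rw [hd]; exact hur I
    · intro I J K g₁ g₂ f₁ f₂
      rw [hd I K]
      apply iSup_le
      rintro ⟨⟨x₁, x₂⟩, hx⟩
      calc Δ K (sh J K g₁ (f₁ x₁)) (sh J K g₂ (f₂ x₂))
          ≤ Δ J (f₁ x₁) (f₂ x₂) +
              ⨆ p : {p : J × J // E J p.1 p.2}, Δ K (g₁ p.1.1) (g₂ p.1.2) :=
            hcmp J K g₁ g₂ (f₁ x₁) (f₂ x₂)
        _ ≤ d I J f₁ f₂ +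
              ⨆ p : {p : J × J // E J p.1 p.2}, Δ K (g₁ p.1.1) (g₂ p.1.2) := by
            apply add_le_add_left
            rw [hd]
            exact le_iSup (fun p : {p : I × I // E I p.1 p.2} =>
              Δ J (f₁ p.1.1) (f₂ p.1.2)) ⟨(x₁, x₂), hx⟩
        _ = d J K g₁ g₂ + d I J f₁ f₂ := by rw [hd J K, add_comm]
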